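/- Let H be a graded connected commutative Hopf algebra over ℚ, D = S ⋆ Y the Dynkin operator, and Π the operator that is the identity on H₀ and equals Y^{-1}∘D on H_{>0}. Then Π is a projector: Π² = Π. -/

import Mathlib

open scoped TensorProduct

/-- Convolution product of linear endomorphisms of a Hopf algebra:
`φ ⋆ ψ = m ∘ (φ ⊗ ψ) ∘ Δ`. -/
noncomputable def conv {H : Type} [CommRing H] [HopfAlgebra ℚ H]
    (φ ψ : H →ₗ[ℚ] H) : H →ₗ[ℚ] H :=
  LinearMap.mul' ℚ H ∘ₗ TensorProduct.map φ ψ ∘ₗ (Coalgebra.comul (R := ℚ))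

/-- The grading operator `Y`, multiplying a homogeneous element of weight `n` by `n`. -/
noncomputable def gradingOp {H : Type} [CommRing H] [Algebra ℚ H]
    (𝒜 : ℕ → Submodule ℚ H) [GradedAlgebra 𝒜] : H →ₗ[ℚ] H :=
  (DirectSum.toModule ℚ ℕ H fun n => (n : ℚ) • (𝒜 n).subtype) ∘ₗ
    (DirectSum.decomposeLinearEquiv 𝒜).toLinearMap

/-- The Dynkin operator `D = S ⋆ Y`. -/
noncomputable def dynkinOp {H : Type} [CommRing H] [HopfAlgebra ℚ H]
    (𝒜 : ℕ → Submodule ℚ H) [GradedAlgebra 𝒜] : H →ₗ[ℚ] H :=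
  conv (HopfAlgebra.antipode (R := ℚ)) (gradingOp 𝒜)

/-- The operator `Π`, equal to the identity on `H₀` and to `Y⁻¹ ∘ D` on `H_{>0}`:
on a homogeneous element `x` of degree `n > 0` it acts as `x ↦ D(x)/n`. -/
noncomputable def piOp {H : Type} [CommRing H] [HopfAlgebra ℚ H]
    (𝒜 : ℕ → Submodule ℚ H) [GradedAlgebra 𝒜] : H →ₗ[ℚ] H :=
  (DirectSum.toModule ℚ ℕ H fun n =>
      if n = 0 then (𝒜 n).subtype
      else ((n : ℚ)⁻¹ • dynkinOp 𝒜) ∘ₗ (𝒜 n).subtype) ∘ₗ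
    (DirectSum.decomposeLinearEquiv 𝒜).toLinearMap

section Aux

variable {H : Type} [CommRing H] [HopfAlgebra ℚ H]
  (𝒜 : ℕ → Submodule ℚ H) [GradedAlgebra 𝒜]

lemma gradingOp_apply_of_mem {n : ℕ} {x : H} (hx : x ∈ 𝒜 n) :
    gradingOp 𝒜 x = (n : ℚ) • x := by
  unfold gradingOp
  simp only [LinearMap.comp_apply, LinearEquiv.coe_toLinearMap,
    DirectSum.decomposeLinearEquiv_apply, DirectSum.decompose_of_mem 𝒜 hx]
  rw [← DirectSum.lof_eq_of ℚ, DirectSum.toModule_lof]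
  simp

lemma piOp_apply_of_mem {n : ℕ} {x : H} (hx : x ∈ 𝒜 n) :
    piOp 𝒜 x = if n = 0 then x else (n : ℚ)⁻¹ • dynkinOp 𝒜 x := by
  unfold piOp
  simp only [LinearMap.comp_apply, LinearEquiv.coe_toLinearMap,
    DirectSum.decomposeLinearEquiv_apply, DirectSum.decompose_of_mem 𝒜 hx]
  rw [← DirectSum.lof_eq_of ℚ, DirectSum.toModule_lof]
  split <;> simp

end Aux

section S5
open TensorProduct LinearMap Coalgebra

variable {H : Type} [CommRing H] [HopfAlgebra ℚ H]
  (𝒜 : ℕ → Submodule ℚ H) [GradedAlgebra 𝒜]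

local notation "μ" => LinearMap.mul' ℚ H
local notation "S" => HopfAlgebra.antipode (R := ℚ) (A := H)
local notation "Δ" => Coalgebra.comul (R := ℚ) (A := H)
local notation "Y" => gradingOp 𝒜

lemma id_conv_dynkin : μ ∘ₗ (dynkinOp 𝒜).lTensor H ∘ₗ Δ = gradingOp 𝒜 := by
  have hG : μ ∘ₗ (LinearMap.lTensor H (μ ∘ₗ (TensorProduct.map S Y))) ∘ₗ
        (TensorProduct.assoc ℚ H H H).toLinearMap
      = μ ∘ₗ (TensorProduct.map (μ ∘ₗ (LinearMap.lTensor H S)) Y) := by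
    apply TensorProduct.ext_threefold
    intro a b c
    simp [mul_assoc]
  have hH1 : μ ∘ₗ (TensorProduct.map ((Algebra.linearMap ℚ H) ∘ₗ Coalgebra.counit) Y)
      = Y ∘ₗ (TensorProduct.lid ℚ H).toLinearMap ∘ₗ
          (Coalgebra.counit (R := ℚ) (A := H)).rTensor H := by
    apply TensorProduct.ext'
    intro a b
    simp only [LinearMap.comp_apply, TensorProduct.map_tmul, LinearMap.mul'_apply,
      LinearMap.rTensor_tmul, LinearEquiv.coe_toLinearMap, TensorProduct.lid_tmul,
      Algebra.linearMap_apply]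
    rw [← Algebra.smul_def, map_smul]
  have step1 : μ ∘ₗ (dynkinOp 𝒜).lTensor H ∘ₗ Δ
      = μ ∘ₗ (LinearMap.lTensor H (μ ∘ₗ (TensorProduct.map S Y))) ∘ₗ
          (LinearMap.lTensor H Δ) ∘ₗ Δ := by
    rw [show dynkinOp 𝒜 = (μ ∘ₗ (TensorProduct.map S Y)) ∘ₗ Δ from rfl,
      LinearMap.lTensor_comp]
    rfl
  rw [step1, ← Coalgebra.coassoc]
  calc μ ∘ₗ (LinearMap.lTensor H (μ ∘ₗ (TensorProduct.map S Y))) ∘ₗ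
        ((TensorProduct.assoc ℚ H H H).toLinearMap ∘ₗ (rTensor H Δ) ∘ₗ Δ)
      = (μ ∘ₗ (LinearMap.lTensor H (μ ∘ₗ (TensorProduct.map S Y))) ∘ₗ
          (TensorProduct.assoc ℚ H H H).toLinearMap) ∘ₗ (rTensor H Δ) ∘ₗ Δ := by
        simp only [LinearMap.comp_assoc]
    _ = (μ ∘ₗ (TensorProduct.map (μ ∘ₗ (LinearMap.lTensor H S)) Y)) ∘ₗ (rTensor H Δ) ∘ₗ Δ := by
        rw [hG]
    _ = μ ∘ₗ (TensorProduct.map ((μ ∘ₗ (LinearMap.lTensor H S)) ∘ₗ Δ) Y) ∘ₗ Δ := by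
        rw [show (TensorProduct.map ((μ ∘ₗ (LinearMap.lTensor H S)) ∘ₗ Δ) Y)
            = (TensorProduct.map (μ ∘ₗ (LinearMap.lTensor H S)) Y) ∘ₗ (rTensor H Δ) by
          rw [LinearMap.rTensor, ← TensorProduct.map_comp]; rfl]
        simp only [LinearMap.comp_assoc]
    _ = μ ∘ₗ (TensorProduct.map ((Algebra.linearMap ℚ H) ∘ₗ Coalgebra.counit) Y) ∘ₗ Δ := by
        rw [LinearMap.comp_assoc, HopfAlgebra.mul_antipode_lTensor_comul]
    _ = (Y ∘ₗ (TensorProduct.lid ℚ H).toLinearMap ∘ₗ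
          (Coalgebra.counit (R := ℚ) (A := H)).rTensor H) ∘ₗ Δ := by
        rw [← hH1]; simp only [LinearMap.comp_assoc]
    _ = Y := by
        rw [LinearMap.comp_assoc, LinearMap.comp_assoc, Coalgebra.rTensor_counit_comp_comul]
        ext x; simp

end S5
section Proj
open TensorProduct LinearMap Coalgebra

variable {H : Type} [CommRing H] [HopfAlgebra ℚ H]
  (𝒜 : ℕ → Submodule ℚ H) [GradedAlgebra 𝒜]

/-- projection onto `𝒜 k`, valued in the submodule. -/
noncomputable def projC (k : ℕ) : H →ₗ[ℚ] 𝒜 k :=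
  (DirectSum.component ℚ ℕ (fun i => 𝒜 i) k) ∘ₗ (DirectSum.decomposeLinearEquiv 𝒜).toLinearMap

/-- projection onto `𝒜 k`, valued in `H`. -/
noncomputable def projH (k : ℕ) : H →ₗ[ℚ] H := (𝒜 k).subtype ∘ₗ projC 𝒜 k

lemma projH_apply (k : ℕ) (x : H) : projH 𝒜 k x = (DirectSum.decompose 𝒜 x k : H) := rfl

lemma projH_mem (k : ℕ) (x : H) : projH 𝒜 k x ∈ 𝒜 k := (projC 𝒜 k x).2

lemma projH_of_mem_same {k : ℕ} {x : H} (hx : x ∈ 𝒜 k) : projH 𝒜 k x = x := by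
  rw [projH_apply, DirectSum.decompose_of_mem_same 𝒜 hx]

lemma projH_of_mem_ne {k m : ℕ} {x : H} (hx : x ∈ 𝒜 m) (h : m ≠ k) : projH 𝒜 k x = 0 := by
  rw [projH_apply, DirectSum.decompose_of_mem_ne 𝒜 hx h]

variable (hΔ : ∀ n : ℕ, ∀ x ∈ 𝒜 n, (Coalgebra.comul (R := ℚ)) x ∈
      ⨆ (p : ℕ × ℕ) (_ : p.1 + p.2 = n),
        LinearMap.range (TensorProduct.map (𝒜 p.1).subtype (𝒜 p.2).subtype))

include hΔ in
lemma comul_sum_proj {n : ℕ} {x : H} (hx : x ∈ 𝒜 n) :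
    (Coalgebra.comul (R := ℚ) x : H ⊗[ℚ] H) =
      ∑ p ∈ Finset.range (n+1),
        (TensorProduct.map (projH 𝒜 p) (projH 𝒜 (n-p))) (Coalgebra.comul (R := ℚ) x) := by
  set F : H ⊗[ℚ] H →ₗ[ℚ] H ⊗[ℚ] H :=
    ∑ p ∈ Finset.range (n+1), TensorProduct.map (projH 𝒜 p) (projH 𝒜 (n-p)) with hF
  have key : (⨆ (p : ℕ × ℕ) (_ : p.1 + p.2 = n),
      LinearMap.range (TensorProduct.map (𝒜 p.1).subtype (𝒜 p.2).subtype)) ≤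
      LinearMap.eqLocus LinearMap.id F := by
    refine iSup_le fun p => iSup_le fun hp => ?_
    rintro z ⟨t, rfl⟩
    have hc : F ∘ₗ TensorProduct.map (𝒜 p.1).subtype (𝒜 p.2).subtype
        = TensorProduct.map (𝒜 p.1).subtype (𝒜 p.2).subtype := by
      apply TensorProduct.ext'
      intro a b
      simp only [hF, LinearMap.comp_apply, TensorProduct.map_tmul, Submodule.coe_subtype,
        LinearMap.coe_sum, Finset.sum_apply]
      rw [Finset.sum_eq_single p.1]
      · rw [projH_of_mem_same 𝒜 a.2, show n - p.1 = p.2 by omega, projH_of_mem_same 𝒜 b.2]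
      · intro r _ hr
        rw [projH_of_mem_ne 𝒜 a.2 (Ne.symm hr), TensorProduct.zero_tmul]
      · intro h
        exact absurd (Finset.mem_range.2 (by omega)) h
    have := congrArg (fun f => f t) hc
    simpa [LinearMap.mem_eqLocus] using this.symm
  have := key (hΔ n x hx)
  rw [LinearMap.mem_eqLocus] at this
  simpa [hF] using this

end Proj
section Edge
open TensorProduct LinearMap Coalgebra

variable {H : Type} [CommRing H] [HopfAlgebra ℚ H]
  (𝒜 : ℕ → Submodule ℚ H) [GradedAlgebra 𝒜]

/-- `a ⊗ b ↦ ε(a) • b` -/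
noncomputable def epsL : H ⊗[ℚ] H →ₗ[ℚ] H :=
  (TensorProduct.lid ℚ H).toLinearMap ∘ₗ (Coalgebra.counit (R := ℚ) (A := H)).rTensor H

/-- `a ⊗ b ↦ ε(b) • a` -/
noncomputable def epsR : H ⊗[ℚ] H →ₗ[ℚ] H :=
  (TensorProduct.rid ℚ H).toLinearMap ∘ₗ (Coalgebra.counit (R := ℚ) (A := H)).lTensor H

@[simp] lemma epsL_tmul (a b : H) :
    epsL (a ⊗ₜ[ℚ] b) = Coalgebra.counit (R := ℚ) a • b := rfl

@[simp] lemma epsR_tmul (a b : H) :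
    epsR (a ⊗ₜ[ℚ] b) = Coalgebra.counit (R := ℚ) b • a := rfl

lemma epsL_comul (x : H) : epsL (Coalgebra.comul (R := ℚ) x) = x := by
  have := congrArg (fun f => (TensorProduct.lid ℚ H).toLinearMap.comp f)
    (Coalgebra.rTensor_counit_comp_comul (R := ℚ) (A := H))
  have h2 := congrArg (fun f => f x) this
  simpa [epsL] using h2

lemma epsR_comul (x : H) : epsR (Coalgebra.comul (R := ℚ) x) = x := by
  have := congrArg (fun f => (TensorProduct.rid ℚ H).toLinearMap.comp f)
    (Coalgebra.lTensor_counit_comp_comul (R := ℚ) (A := H))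
  have h2 := congrArg (fun f => f x) this
  simpa [epsR] using h2

variable (hconn : 𝒜 0 = (1 : Submodule ℚ H))

include hconn in
lemma eq_one_tmul_of_mem {w : H ⊗[ℚ] H}
    (hw : w ∈ LinearMap.range (TensorProduct.map ((𝒜 0).subtype) (LinearMap.id (M := H)))) :
    w = 1 ⊗ₜ[ℚ] (epsL w) := by
  set G : H ⊗[ℚ] H →ₗ[ℚ] H ⊗[ℚ] H := (TensorProduct.mk ℚ H H 1) ∘ₗ epsL with hG
  obtain ⟨t, rfl⟩ := hw
  have hc : G ∘ₗ TensorProduct.map ((𝒜 0).subtype) (LinearMap.id (M := H))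
      = TensorProduct.map ((𝒜 0).subtype) (LinearMap.id (M := H)) := by
    apply TensorProduct.ext'
    intro a b
    have ha0 : (a : H) ∈ (1 : Submodule ℚ H) := by rw [← hconn]; exact a.2
    obtain ⟨q, hq⟩ := (Submodule.mem_one).1 ha0
    simp only [hG, LinearMap.comp_apply, TensorProduct.map_tmul, Submodule.coe_subtype,
      LinearMap.id_coe, id_eq, epsL_tmul, TensorProduct.mk_apply]
    rw [← hq, Bialgebra.counit_algebraMap, Algebra.algebraMap_eq_smul_one,
      TensorProduct.smul_tmul]
  have := congrArg (fun f => f t) hc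
  simpa [hG] using this.symm

include hconn in
lemma eq_tmul_one_of_mem {w : H ⊗[ℚ] H}
    (hw : w ∈ LinearMap.range (TensorProduct.map (LinearMap.id (M := H)) ((𝒜 0).subtype))) :
    w = (epsR w) ⊗ₜ[ℚ] 1 := by
  set G : H ⊗[ℚ] H →ₗ[ℚ] H ⊗[ℚ] H := ((TensorProduct.mk ℚ H H).flip 1) ∘ₗ epsR with hG
  obtain ⟨t, rfl⟩ := hw
  have hc : G ∘ₗ TensorProduct.map (LinearMap.id (M := H)) ((𝒜 0).subtype)
      = TensorProduct.map (LinearMap.id (M := H)) ((𝒜 0).subtype) := by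
    apply TensorProduct.ext'
    intro a b
    have hb0 : (b : H) ∈ (1 : Submodule ℚ H) := by rw [← hconn]; exact b.2
    obtain ⟨q, hq⟩ := (Submodule.mem_one).1 hb0
    simp only [hG, LinearMap.comp_apply, TensorProduct.map_tmul, Submodule.coe_subtype,
      LinearMap.id_coe, id_eq, epsR_tmul, TensorProduct.mk_apply, LinearMap.flip_apply]
    rw [← hq, Bialgebra.counit_algebraMap, Algebra.algebraMap_eq_smul_one,
      TensorProduct.smul_tmul]
  have := congrArg (fun f => f t) hc
  simpa [hG] using this.symm

end Edge
section Structure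
open TensorProduct LinearMap Coalgebra

variable {H : Type} [CommRing H] [HopfAlgebra ℚ H]
  (𝒜 : ℕ → Submodule ℚ H) [GradedAlgebra 𝒜]

/-- The span of pure tensors of positive bidegree `(p, q)` with `p + q = n`. -/
noncomputable def Mid (n : ℕ) : Submodule ℚ (H ⊗[ℚ] H) :=
  Submodule.span ℚ {z | ∃ p : ℕ, ∃ q : ℕ, ∃ a b : H, p + q = n ∧ 0 < p ∧ 0 < q ∧
    a ∈ 𝒜 p ∧ b ∈ 𝒜 q ∧ z = a ⊗ₜ[ℚ] b}

lemma range_le_Mid {p q n : ℕ} (hpq : p + q = n) (hp : 0 < p) (hq : 0 < q) :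
    LinearMap.range (TensorProduct.map ((𝒜 p).subtype) ((𝒜 q).subtype)) ≤ Mid 𝒜 n := by
  rw [TensorProduct.range_map_eq_span_tmul]
  refine Submodule.span_le.2 ?_
  rintro z ⟨a, b, rfl⟩
  exact Submodule.subset_span ⟨p, q, a, b, hpq, hp, hq, a.2, b.2, rfl⟩

lemma map_projH_mem_range (p q : ℕ) (w : H ⊗[ℚ] H) :
    (TensorProduct.map (projH 𝒜 p) (projH 𝒜 q)) w ∈
      LinearMap.range (TensorProduct.map ((𝒜 p).subtype) ((𝒜 q).subtype)) := by
  refine ⟨(TensorProduct.map (projC 𝒜 p) (projC 𝒜 q)) w, ?_⟩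
  have : TensorProduct.map ((𝒜 p).subtype) ((𝒜 q).subtype) ∘ₗ
      TensorProduct.map (projC 𝒜 p) (projC 𝒜 q)
      = TensorProduct.map (projH 𝒜 p) (projH 𝒜 q) := by
    rw [← TensorProduct.map_comp]; rfl
  exact congrArg (fun f => f w) this

variable (hconn : 𝒜 0 = (1 : Submodule ℚ H))
variable (hΔ : ∀ n : ℕ, ∀ x ∈ 𝒜 n, (Coalgebra.comul (R := ℚ)) x ∈
      ⨆ (p : ℕ × ℕ) (_ : p.1 + p.2 = n),
        LinearMap.range (TensorProduct.map (𝒜 p.1).subtype (𝒜 p.2).subtype))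

lemma epsL_term_mem (n : ℕ) (x : H) (p : ℕ) :
    epsL ((TensorProduct.map (projH 𝒜 p) (projH 𝒜 (n-p))) (Coalgebra.comul (R := ℚ) x))
      ∈ 𝒜 (n - p) := by
  have : epsL ∘ₗ (TensorProduct.map (projH 𝒜 p) (projH 𝒜 (n-p)))
      = projH 𝒜 (n-p) ∘ₗ epsL ∘ₗ (TensorProduct.map (projH 𝒜 p) (LinearMap.id)) := by
    apply TensorProduct.ext'
    intro a b
    simp [projH_mem, map_smul]
  have h2 := congrArg (fun f => f (Coalgebra.comul (R := ℚ) x)) this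
  simp only [LinearMap.comp_apply] at h2
  rw [h2]
  exact projH_mem 𝒜 _ _

lemma epsR_term_mem (n : ℕ) (x : H) (p : ℕ) :
    epsR ((TensorProduct.map (projH 𝒜 p) (projH 𝒜 (n-p))) (Coalgebra.comul (R := ℚ) x))
      ∈ 𝒜 p := by
  have : epsR ∘ₗ (TensorProduct.map (projH 𝒜 p) (projH 𝒜 (n-p)))
      = projH 𝒜 p ∘ₗ epsR ∘ₗ (TensorProduct.map (LinearMap.id) (projH 𝒜 (n-p))) := by
    apply TensorProduct.ext'
    intro a b
    simp [projH_mem, map_smul]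
  have h2 := congrArg (fun f => f (Coalgebra.comul (R := ℚ) x)) this
  simp only [LinearMap.comp_apply] at h2
  rw [h2]
  exact projH_mem 𝒜 _ _

include hΔ hconn in
lemma w0_eq {n : ℕ} (hn : 0 < n) {x : H} (hx : x ∈ 𝒜 n) :
    (TensorProduct.map (projH 𝒜 0) (projH 𝒜 n)) (Coalgebra.comul (R := ℚ) x)
      = 1 ⊗ₜ[ℚ] x := by
  set w : ℕ → H ⊗[ℚ] H := fun p =>
    (TensorProduct.map (projH 𝒜 p) (projH 𝒜 (n-p))) (Coalgebra.comul (R := ℚ) x) with hw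
  have hw0 : w 0 = (TensorProduct.map (projH 𝒜 0) (projH 𝒜 n)) (Coalgebra.comul (R := ℚ) x) := by
    simp only [hw, Nat.sub_zero]
  have hsum : (Coalgebra.comul (R := ℚ) x : H ⊗[ℚ] H) = ∑ p ∈ Finset.range (n+1), w p :=
    comul_sum_proj 𝒜 hΔ hx
  have hA : x = ∑ p ∈ Finset.range (n+1), epsL (w p) := by
    conv_lhs => rw [← epsL_comul (H := H) x, hsum]
    rw [map_sum]
  have hB : epsL (w 0) = x := by
    have h1 := congrArg (projH 𝒜 n) hA
    rw [projH_of_mem_same 𝒜 hx, map_sum] at h1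
    rw [Finset.sum_eq_single 0] at h1
    · rw [h1]
      exact (projH_of_mem_same 𝒜
        (show epsL (w 0) ∈ 𝒜 n by
          rw [hw0]
          simpa using epsL_term_mem 𝒜 n x 0)).symm
    · intro p hp hp0
      exact projH_of_mem_ne 𝒜 (epsL_term_mem 𝒜 n x p)
        (by simp only [Finset.mem_range] at hp; omega)
    · intro h
      exact absurd (Finset.mem_range.2 (by omega)) h
  have hmem : w 0 ∈ LinearMap.range
      (TensorProduct.map ((𝒜 0).subtype) (LinearMap.id (M := H))) := by
    rw [hw0]
    refine ⟨(TensorProduct.map (projC 𝒜 0) (projH 𝒜 n)) (Coalgebra.comul (R := ℚ) x), ?_⟩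
    have h3 : TensorProduct.map ((𝒜 0).subtype) (LinearMap.id (M := H)) ∘ₗ
        TensorProduct.map (projC 𝒜 0) (projH 𝒜 n)
        = TensorProduct.map (projH 𝒜 0) (projH 𝒜 n) := by
      rw [← TensorProduct.map_comp]; rfl
    exact congrArg (fun f => f (Coalgebra.comul (R := ℚ) x)) h3
  have h4 := eq_one_tmul_of_mem 𝒜 hconn hmem
  rw [hB] at h4
  rw [← hw0]; exact h4

include hΔ hconn in
lemma wn_eq {n : ℕ} (hn : 0 < n) {x : H} (hx : x ∈ 𝒜 n) :
    (TensorProduct.map (projH 𝒜 n) (projH 𝒜 0)) (Coalgebra.comul (R := ℚ) x)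
      = x ⊗ₜ[ℚ] 1 := by
  set w : ℕ → H ⊗[ℚ] H := fun p =>
    (TensorProduct.map (projH 𝒜 p) (projH 𝒜 (n-p))) (Coalgebra.comul (R := ℚ) x) with hw
  have hwn : w n = (TensorProduct.map (projH 𝒜 n) (projH 𝒜 0)) (Coalgebra.comul (R := ℚ) x) := by
    simp only [hw, Nat.sub_self]
  have hsum : (Coalgebra.comul (R := ℚ) x : H ⊗[ℚ] H) = ∑ p ∈ Finset.range (n+1), w p :=
    comul_sum_proj 𝒜 hΔ hx
  have hA : x = ∑ p ∈ Finset.range (n+1), epsR (w p) := by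
    conv_lhs => rw [← epsR_comul (H := H) x, hsum]
    rw [map_sum]
  have hB : epsR (w n) = x := by
    have h1 := congrArg (projH 𝒜 n) hA
    rw [projH_of_mem_same 𝒜 hx, map_sum] at h1
    rw [Finset.sum_eq_single n] at h1
    · rw [h1]
      exact (projH_of_mem_same 𝒜 (epsR_term_mem 𝒜 n x n)).symm
    · intro p hp hp0
      exact projH_of_mem_ne 𝒜 (epsR_term_mem 𝒜 n x p) hp0
    · intro h
      exact absurd (Finset.mem_range.2 (by omega)) h
  have hmem : w n ∈ LinearMap.range
      (TensorProduct.map (LinearMap.id (M := H)) ((𝒜 0).subtype)) := by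
    rw [hwn]
    refine ⟨(TensorProduct.map (projH 𝒜 n) (projC 𝒜 0)) (Coalgebra.comul (R := ℚ) x), ?_⟩
    have h3 : TensorProduct.map (LinearMap.id (M := H)) ((𝒜 0).subtype) ∘ₗ
        TensorProduct.map (projH 𝒜 n) (projC 𝒜 0)
        = TensorProduct.map (projH 𝒜 n) (projH 𝒜 0) := by
      rw [← TensorProduct.map_comp]; rfl
    exact congrArg (fun f => f (Coalgebra.comul (R := ℚ) x)) h3
  have h4 := eq_tmul_one_of_mem 𝒜 hconn hmem
  rw [hB] at h4
  rw [← hwn]; exact h4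

include hΔ hconn in
lemma comul_structure {n : ℕ} (hn : 0 < n) {x : H} (hx : x ∈ 𝒜 n) :
    ∃ r ∈ Mid 𝒜 n, (Coalgebra.comul (R := ℚ) x : H ⊗[ℚ] H)
      = 1 ⊗ₜ[ℚ] x + x ⊗ₜ[ℚ] 1 + r := by
  obtain ⟨k, rfl⟩ : ∃ k, n = k + 1 := ⟨n-1, by omega⟩
  set w : ℕ → H ⊗[ℚ] H := fun p =>
    (TensorProduct.map (projH 𝒜 p) (projH 𝒜 (k+1-p))) (Coalgebra.comul (R := ℚ) x) with hw
  refine ⟨∑ i ∈ Finset.range k, w (i+1), ?_, ?_⟩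
  · refine Submodule.sum_mem _ fun i hi => ?_
    have hik : i < k := Finset.mem_range.1 hi
    exact range_le_Mid 𝒜 (p := i+1) (q := k+1 - (i+1)) (by omega) (by omega) (by omega)
      (map_projH_mem_range 𝒜 _ _ _)
  · have hsum : (Coalgebra.comul (R := ℚ) x : H ⊗[ℚ] H)
        = ∑ p ∈ Finset.range (k+2), w p := comul_sum_proj 𝒜 hΔ hx
    have e0 : w 0 = 1 ⊗ₜ[ℚ] x := by
      have := w0_eq 𝒜 hconn hΔ hn hx
      simp only [hw, Nat.sub_zero]
      exact this
    have en : w (k+1) = x ⊗ₜ[ℚ] 1 := by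
      have := wn_eq 𝒜 hconn hΔ hn hx
      simp only [hw, Nat.sub_self]
      exact this
    rw [hsum, Finset.sum_range_succ, Finset.sum_range_succ', e0, en]
    abel

end Structure
section Dynkin
open TensorProduct LinearMap Coalgebra

variable {H : Type} [CommRing H] [HopfAlgebra ℚ H]
  (𝒜 : ℕ → Submodule ℚ H) [GradedAlgebra 𝒜]

/-- `a ⊗ b ↦ a * D b`. -/
noncomputable def muD : H ⊗[ℚ] H →ₗ[ℚ] H :=
  LinearMap.mul' ℚ H ∘ₗ (dynkinOp 𝒜).lTensor H

@[simp] lemma muD_tmul (a b : H) : muD 𝒜 (a ⊗ₜ[ℚ] b) = a * dynkinOp 𝒜 b := rfl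

lemma muD_comul (x : H) : muD 𝒜 (Coalgebra.comul (R := ℚ) x) = gradingOp 𝒜 x := by
  have := LinearMap.congr_fun (id_conv_dynkin 𝒜) x
  simp only [LinearMap.comp_apply] at this
  exact this

lemma dynkin_one : dynkinOp 𝒜 1 = 0 := by
  have h1 : gradingOp 𝒜 (1 : H) = 0 := by
    rw [gradingOp_apply_of_mem 𝒜 (SetLike.one_mem_graded 𝒜)]
    simp
  show (LinearMap.mul' ℚ H)
    ((TensorProduct.map (HopfAlgebra.antipode (R := ℚ)) (gradingOp 𝒜))
      (Coalgebra.comul (R := ℚ) 1)) = 0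
  rw [Bialgebra.comul_one, Algebra.TensorProduct.one_def]
  simp [h1]

variable (hconn : 𝒜 0 = (1 : Submodule ℚ H))

include hconn in
lemma dynkin_of_mem_zero {x : H} (hx : x ∈ 𝒜 0) : dynkinOp 𝒜 x = 0 := by
  have : x ∈ (1 : Submodule ℚ H) := by rw [← hconn]; exact hx
  obtain ⟨q, hq⟩ := Submodule.mem_one.1 this
  rw [← hq, Algebra.algebraMap_eq_smul_one, map_smul, dynkin_one, smul_zero]

variable (hΔ : ∀ n : ℕ, ∀ x ∈ 𝒜 n, (Coalgebra.comul (R := ℚ)) x ∈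
      ⨆ (p : ℕ × ℕ) (_ : p.1 + p.2 = n),
        LinearMap.range (TensorProduct.map (𝒜 p.1).subtype (𝒜 p.2).subtype))

include hconn hΔ in
lemma grading_eq_dynkin_add {n : ℕ} (hn : 0 < n) {x : H} (hx : x ∈ 𝒜 n) :
    ∃ r ∈ Mid 𝒜 n, (n : ℚ) • x = dynkinOp 𝒜 x + muD 𝒜 r ∧
      Coalgebra.comul (R := ℚ) x = 1 ⊗ₜ[ℚ] x + x ⊗ₜ[ℚ] 1 + r := by
  obtain ⟨r, hr, hcs⟩ := comul_structure 𝒜 hconn hΔ hn hx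
  refine ⟨r, hr, ?_, hcs⟩
  have h1 : muD 𝒜 (Coalgebra.comul (R := ℚ) x) = (n : ℚ) • x := by
    rw [muD_comul, gradingOp_apply_of_mem 𝒜 hx]
  rw [hcs] at h1
  rw [← h1]
  simp only [map_add, muD_tmul, one_mul, dynkin_one, mul_zero]
  abel

include hconn hΔ in
lemma dynkin_mul_eq_zero : ∀ n p q : ℕ, p + q = n → 0 < p → 0 < q →
    ∀ u ∈ 𝒜 p, ∀ v ∈ 𝒜 q, dynkinOp 𝒜 (u * v) = 0 := by
  intro n
  induction n using Nat.strong_induction_on with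
  | _ n IH =>
  intro p q hpq hp hq u hu v hv
  obtain ⟨ru, hru, -, hcu⟩ := grading_eq_dynkin_add 𝒜 hconn hΔ hp hu
  obtain ⟨rv, hrv, -, hcv⟩ := grading_eq_dynkin_add 𝒜 hconn hΔ hq hv
  have huv : u * v ∈ 𝒜 n := hpq ▸ SetLike.mul_mem_graded hu hv
  have hY : muD 𝒜 (Coalgebra.comul (R := ℚ) (u * v)) = (n : ℚ) • (u * v) := by
    rw [muD_comul, gradingOp_apply_of_mem 𝒜 huv]
  rw [Bialgebra.comul_mul, hcu, hcv] at hY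
  -- expand the product of sums
  rw [show (1 ⊗ₜ[ℚ] u + u ⊗ₜ[ℚ] 1 + ru) * (1 ⊗ₜ[ℚ] v + v ⊗ₜ[ℚ] 1 + rv)
      = (1 ⊗ₜ[ℚ] u) * (1 ⊗ₜ[ℚ] v) + (1 ⊗ₜ[ℚ] u) * (v ⊗ₜ[ℚ] 1) + (1 ⊗ₜ[ℚ] u) * rv
        + (u ⊗ₜ[ℚ] 1) * (1 ⊗ₜ[ℚ] v) + (u ⊗ₜ[ℚ] 1) * (v ⊗ₜ[ℚ] 1) + (u ⊗ₜ[ℚ] 1) * rv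
        + ru * (1 ⊗ₜ[ℚ] v) + ru * (v ⊗ₜ[ℚ] 1) + ru * rv from by ring] at hY
  simp only [map_add] at hY
  -- the induction hypothesis, in "kernel" form
  have hIH : ∀ p' q' : ℕ, 0 < p' → 0 < q' → p' + q' < n →
      ∀ a ∈ 𝒜 p', ∀ b ∈ 𝒜 q', dynkinOp 𝒜 (a * b) = 0 := by
    intro p' q' hp' hq' hlt a ha b hb
    exact IH (p' + q') hlt p' q' rfl hp' hq' a ha b hb
  -- t3
  have t3 : muD 𝒜 ((1 ⊗ₜ[ℚ] u) * rv) = 0 := by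
    have : Mid 𝒜 q ≤ LinearMap.ker (muD 𝒜 ∘ₗ LinearMap.mulLeft ℚ ((1 : H) ⊗ₜ[ℚ] u)) := by
      refine Submodule.span_le.2 ?_
      rintro z ⟨p', q', a, b, hpq', hp', hq', ha, hb, rfl⟩
      simp only [SetLike.mem_coe, LinearMap.mem_ker, LinearMap.comp_apply,
        LinearMap.mulLeft_apply, Algebra.TensorProduct.tmul_mul_tmul, one_mul, muD_tmul]
      rw [hIH p (q - p') hp (by omega) (by omega) u hu b (by
        have : q' = q - p' := by omega
        exact this ▸ hb), mul_zero]
    simpa using this hrv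
  -- t7
  have t7 : muD 𝒜 (ru * (1 ⊗ₜ[ℚ] v)) = 0 := by
    have : Mid 𝒜 p ≤ LinearMap.ker (muD 𝒜 ∘ₗ LinearMap.mulRight ℚ ((1 : H) ⊗ₜ[ℚ] v)) := by
      refine Submodule.span_le.2 ?_
      rintro z ⟨p', q', a, b, hpq', hp', hq', ha, hb, rfl⟩
      simp only [SetLike.mem_coe, LinearMap.mem_ker, LinearMap.comp_apply,
        LinearMap.mulRight_apply, Algebra.TensorProduct.tmul_mul_tmul, mul_one, muD_tmul]
      rw [hIH (p - p') q (by omega) hq (by omega) b (by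
        have : q' = p - p' := by omega
        exact this ▸ hb) v hv, mul_zero]
    simpa using this hru
  -- t9
  have t9 : muD 𝒜 (ru * rv) = 0 := by
    have houter : Mid 𝒜 p ≤ LinearMap.ker ((muD 𝒜) ∘ₗ LinearMap.mulRight ℚ rv) := by
      refine Submodule.span_le.2 ?_
      rintro z ⟨p', q', a, b, hpq', hp', hq', ha, hb, rfl⟩
      simp only [SetLike.mem_coe, LinearMap.mem_ker, LinearMap.comp_apply,
        LinearMap.mulRight_apply]
      have hinner : Mid 𝒜 q ≤ LinearMap.ker ((muD 𝒜) ∘ₗ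
          LinearMap.mulLeft ℚ (a ⊗ₜ[ℚ] b)) := by
        refine Submodule.span_le.2 ?_
        rintro z' ⟨p'', q'', a', b', hpq'', hp'', hq'', ha', hb', rfl⟩
        simp only [SetLike.mem_coe, LinearMap.mem_ker, LinearMap.comp_apply,
          LinearMap.mulLeft_apply, Algebra.TensorProduct.tmul_mul_tmul, muD_tmul]
        rw [hIH q' q'' (by omega) (by omega) (by omega) b hb b' hb', mul_zero]
      simpa using hinner hrv
    simpa using houter hru
  -- t6 and t8 : linear map identities
  have t6 : muD 𝒜 ((u ⊗ₜ[ℚ] 1) * rv) = u * muD 𝒜 rv := by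
    have h : (muD 𝒜) ∘ₗ LinearMap.mulLeft ℚ (u ⊗ₜ[ℚ] (1 : H))
        = LinearMap.mulLeft ℚ u ∘ₗ muD 𝒜 := by
      apply TensorProduct.ext'
      intro a b
      simp [mul_assoc]
    exact LinearMap.congr_fun h rv
  have t8 : muD 𝒜 (ru * (v ⊗ₜ[ℚ] 1)) = v * muD 𝒜 ru := by
    have h : (muD 𝒜) ∘ₗ LinearMap.mulRight ℚ (v ⊗ₜ[ℚ] (1 : H))
        = LinearMap.mulLeft ℚ v ∘ₗ muD 𝒜 := by
      apply TensorProduct.ext'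
      intro a b
      simp only [LinearMap.comp_apply, LinearMap.mulRight_apply, LinearMap.mulLeft_apply,
        Algebra.TensorProduct.tmul_mul_tmul, mul_one, muD_tmul]
      ring
    exact LinearMap.congr_fun h ru
  -- values of muD on the remaining pure-tensor terms
  have t1 : muD 𝒜 ((1 ⊗ₜ[ℚ] u) * (1 ⊗ₜ[ℚ] v)) = dynkinOp 𝒜 (u * v) := by
    rw [Algebra.TensorProduct.tmul_mul_tmul, muD_tmul, one_mul, one_mul]
  have t2 : muD 𝒜 ((1 ⊗ₜ[ℚ] u) * (v ⊗ₜ[ℚ] 1)) = v * dynkinOp 𝒜 u := by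
    rw [Algebra.TensorProduct.tmul_mul_tmul, muD_tmul, one_mul, mul_one]
  have t4 : muD 𝒜 ((u ⊗ₜ[ℚ] 1) * (1 ⊗ₜ[ℚ] v)) = u * dynkinOp 𝒜 v := by
    rw [Algebra.TensorProduct.tmul_mul_tmul, muD_tmul, mul_one, one_mul]
  have t5 : muD 𝒜 ((u ⊗ₜ[ℚ] 1) * (v ⊗ₜ[ℚ] 1)) = 0 := by
    rw [Algebra.TensorProduct.tmul_mul_tmul, muD_tmul, one_mul, dynkin_one, mul_zero]
  -- values of muD on the reduced parts
  have hmuDru : muD 𝒜 ru = (p : ℚ) • u - dynkinOp 𝒜 u := by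
    have h1 : muD 𝒜 (Coalgebra.comul (R := ℚ) u) = (p : ℚ) • u := by
      rw [muD_comul, gradingOp_apply_of_mem 𝒜 hu]
    rw [hcu] at h1
    simp only [map_add, muD_tmul, one_mul, dynkin_one, mul_zero] at h1
    rw [← h1]; abel
  have hmuDrv : muD 𝒜 rv = (q : ℚ) • v - dynkinOp 𝒜 v := by
    have h1 : muD 𝒜 (Coalgebra.comul (R := ℚ) v) = (q : ℚ) • v := by
      rw [muD_comul, gradingOp_apply_of_mem 𝒜 hv]
    rw [hcv] at h1
    simp only [map_add, muD_tmul, one_mul, dynkin_one, mul_zero] at h1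
    rw [← h1]; abel
  rw [t1, t2, t3, t4, t5, t6, t7, t8, t9, hmuDru, hmuDrv] at hY
  -- now pure algebra
  have hpq' : (p : ℚ) + (q : ℚ) = (n : ℚ) := by push_cast [← hpq]; ring
  have key : dynkinOp 𝒜 (u * v) + v * dynkinOp 𝒜 u + 0 + u * dynkinOp 𝒜 v + 0
        + u * ((q:ℚ) • v - dynkinOp 𝒜 v) + 0 + v * ((p:ℚ) • u - dynkinOp 𝒜 u) + 0
      = dynkinOp 𝒜 (u * v) + (n:ℚ) • (u * v) := by
    rw [← hpq']
    simp only [mul_sub, mul_smul_comm, add_smul, mul_comm v u]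
    abel
  rw [key] at hY
  simpa using hY

include hconn hΔ in
lemma dynkin_mem : ∀ n : ℕ, ∀ x ∈ 𝒜 n, dynkinOp 𝒜 x ∈ 𝒜 n := by
  intro n
  induction n using Nat.strong_induction_on with
  | _ n IH =>
  intro x hx
  rcases Nat.eq_zero_or_pos n with hn | hn
  · subst hn
    rw [dynkin_of_mem_zero 𝒜 hconn hx]
    exact Submodule.zero_mem _
  obtain ⟨r, hr, heq, -⟩ := grading_eq_dynkin_add 𝒜 hconn hΔ hn hx
  have hmuDr : muD 𝒜 r ∈ 𝒜 n := by
    have hle : Mid 𝒜 n ≤ (𝒜 n).comap (muD 𝒜) := by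
      refine Submodule.span_le.2 ?_
      rintro z ⟨p', q', a, b, hpq', hp', hq', ha, hb, rfl⟩
      simp only [SetLike.mem_coe, Submodule.mem_comap, muD_tmul]
      have hDb : dynkinOp 𝒜 b ∈ 𝒜 q' := IH q' (by omega) b hb
      exact hpq' ▸ SetLike.mul_mem_graded ha hDb
    exact hle hr
  have : dynkinOp 𝒜 x = (n : ℚ) • x - muD 𝒜 r := by rw [heq]; abel
  rw [this]
  exact Submodule.sub_mem _ (Submodule.smul_mem _ _ hx) hmuDr

include hconn hΔ in
lemma dynkin_dynkin {n : ℕ} {x : H} (hx : x ∈ 𝒜 n) :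
    dynkinOp 𝒜 (dynkinOp 𝒜 x) = (n : ℚ) • dynkinOp 𝒜 x := by
  rcases Nat.eq_zero_or_pos n with hn | hn
  · subst hn
    rw [dynkin_of_mem_zero 𝒜 hconn hx]
    simp
  obtain ⟨r, hr, heq, -⟩ := grading_eq_dynkin_add 𝒜 hconn hΔ hn hx
  have hDr : dynkinOp 𝒜 (muD 𝒜 r) = 0 := by
    have hle : Mid 𝒜 n ≤ LinearMap.ker (dynkinOp 𝒜 ∘ₗ muD 𝒜) := by
      refine Submodule.span_le.2 ?_
      rintro z ⟨p', q', a, b, hpq', hp', hq', ha, hb, rfl⟩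
      simp only [SetLike.mem_coe, LinearMap.mem_ker, LinearMap.comp_apply, muD_tmul]
      rcases Nat.eq_zero_or_pos q' with hq0 | hq0
      · subst hq0
        rw [dynkin_of_mem_zero 𝒜 hconn hb, mul_zero, map_zero]
      · exact dynkin_mul_eq_zero 𝒜 hconn hΔ (p' + q') p' q' rfl hp' hq0 a ha
          (dynkinOp 𝒜 b) (dynkin_mem 𝒜 hconn hΔ q' b hb)
    simpa using hle hr
  have h2 := congrArg (dynkinOp 𝒜) heq
  rw [map_smul, map_add, hDr, add_zero] at h2
  exact h2.symm

end Dynkin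

/-- In a graded connected commutative Hopf algebra over ℚ, the operator `Π`
(identity on `H₀`, `Y⁻¹∘D` on `H_{>0}`) is a projector: `Π² = Π`. -/
theorem piOp_idempotent {H : Type} [CommRing H] [HopfAlgebra ℚ H]
    (𝒜 : ℕ → Submodule ℚ H) [GradedAlgebra 𝒜]
    (hconn : 𝒜 0 = (1 : Submodule ℚ H))
    (hΔ : ∀ n : ℕ, ∀ x ∈ 𝒜 n, (Coalgebra.comul (R := ℚ)) x ∈
      ⨆ (p : ℕ × ℕ) (_ : p.1 + p.2 = n),
        LinearMap.range (TensorProduct.map (𝒜 p.1).subtype (𝒜 p.2).subtype)) :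
    piOp 𝒜 ∘ₗ piOp 𝒜 = piOp 𝒜 := by
  apply LinearMap.ext
  refine DirectSum.Decomposition.inductionOn 𝒜 ?_ ?_ ?_
  · simp
  · intro i m
    rw [LinearMap.comp_apply]
    have hx := m.2
    rcases Nat.eq_zero_or_pos i with h0 | hpos
    · subst h0
      rw [piOp_apply_of_mem 𝒜 hx, if_pos rfl, piOp_apply_of_mem 𝒜 hx, if_pos rfl]
    · have hD : dynkinOp 𝒜 (m : H) ∈ 𝒜 i := dynkin_mem 𝒜 hconn hΔ i _ hx
      have hi : (i : ℚ) ≠ 0 := by positivity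
      rw [piOp_apply_of_mem 𝒜 hx, if_neg (by omega), map_smul,
        piOp_apply_of_mem 𝒜 hD, if_neg (by omega),
        dynkin_dynkin 𝒜 hconn hΔ hx, smul_smul, smul_smul]
      rw [mul_assoc, inv_mul_cancel₀ hi, mul_one]
  · intro x y hx hy
    simp only [LinearMap.comp_apply] at hx hy ⊢
    simp only [map_add, hx, hy]
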